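/- arXiv:0809.1531 — 2 statements merged into one kernel-verified Lean document; each statement's English description precedes it below -/
import Mathlib

section
/- Let H and H_f be self-adjoint operators on a Hilbert space with H_f ≥ 0, and set R = (H+i)^{-1}. Suppose that for each l ≥ 0 the iterated commutator W_l := ad_{H_f}^l(H) (defined as a quadratic form on a suitable common core, with W_0 interpreted via [H_f, R] = −R W_1 R and [H_f, W_j] = W_{j+1}) is such that W_l R is a bounded operator for all l ≥ 1. Then for every l ∈ ℕ, ad_{H_f}^l(R) is a bounded operator, and moreover ad_{H_f}^l(R) = Σ c_{j_1,…,j_k} R W_{j_1} R ⋯ W_{j_k} R, a finite sum over 1 ≤ k ≤ l and j_1,…,j_m ≥ 1 with j_1 + … + j_k = l, with integer combinatorial coefficients. -/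
/-- `adPow h n x` is the `n`-fold commutator `ad_h^n(x) = [h,[h,…,[h,x]…]]`. -/
def adPow {A : Type*} [Ring A] (h : A) : ℕ → A → A
  | 0, x => x
  | n + 1, x => h * adPow h n x - adPow h n x * h

/-- The word `r w_{j₁} r w_{j₂} r ⋯ w_{j_k} r` associated with a list `[j₁,…,j_k]`. -/
def commWord {A : Type*} [Ring A] (r : A) (w : ℕ → A) (L : List ℕ) : A :=
  r * (L.map (fun j => w j * r)).prod

lemma hom_closure_mem {A B : Type*} [AddGroup A] [AddGroup B] (f : A →+ B)
    {S : Set A} {T : Set B} (hST : ∀ s ∈ S, f s ∈ AddSubgroup.closure T)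
    {x : A} (hx : x ∈ AddSubgroup.closure S) : f x ∈ AddSubgroup.closure T := by
  have : AddSubgroup.closure S ≤ (AddSubgroup.closure T).comap f :=
    (AddSubgroup.closure_le _).2 (fun s hs => hST s hs)
  exact this hx

lemma commWord_nil {A : Type*} [Ring A] (r : A) (w : ℕ → A) :
    commWord r w [] = r := by simp [commWord]

lemma commWord_cons {A : Type*} [Ring A] (r : A) (w : ℕ → A) (j : ℕ) (L : List ℕ) :
    commWord r w (j :: L) = r * w j * commWord r w L := by
  simp [commWord, mul_assoc]

lemma key_comm {A : Type*} [Ring A] (h r : A) (w : ℕ → A)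
    (hr : h * r - r * h = -(r * w 1 * r))
    (hw : ∀ j : ℕ, 1 ≤ j → h * w j - w j * h = w (j + 1)) :
    ∀ L : List ℕ, (∀ j ∈ L, 1 ≤ j) →
      h * commWord r w L - commWord r w L * h ∈ AddSubgroup.closure
        {x : A | ∃ L' : List ℕ, L' ≠ [] ∧ L'.length ≤ L.length + 1 ∧
          (∀ j ∈ L', 1 ≤ j) ∧ L'.sum = L.sum + 1 ∧ x = commWord r w L'} := by
  intro L
  induction L with
  | nil =>
    intro _
    rw [commWord_nil, hr]
    refine neg_mem (AddSubgroup.subset_closure ?_)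
    exact ⟨[1], by simp, by simp, by simp, by simp,
      by rw [commWord_cons, commWord_nil]⟩
  | cons j L ih =>
    intro hall
    have hj : 1 ≤ j := hall j List.mem_cons_self
    have hLall : ∀ i ∈ L, 1 ≤ i := fun i hi => hall i (List.mem_cons_of_mem _ hi)
    set C := commWord r w L with hC
    have hsplit : h * commWord r w (j :: L) - commWord r w (j :: L) * h =
        (h * r - r * h) * w j * C + r * (h * w j - w j * h) * C
          + r * w j * (h * C - C * h) := by
      rw [commWord_cons, ← hC]; noncomm_ring
    rw [hsplit, hr, hw j hj]
    refine add_mem (add_mem ?_ ?_) ?_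
    · have : -(r * w 1 * r) * w j * C = -(commWord r w (1 :: j :: L)) := by
        rw [commWord_cons, commWord_cons, ← hC]; noncomm_ring
      rw [this]
      refine neg_mem (AddSubgroup.subset_closure ?_)
      exact ⟨1 :: j :: L, by simp, by simp, by
        intro i hi
        rcases List.mem_cons.1 hi with h1 | h2
        · omega
        · exact hall i h2, by simp [add_comm], rfl⟩
    · have : r * w (j + 1) * C = commWord r w ((j + 1) :: L) := by
        rw [commWord_cons, ← hC]
      rw [this]
      refine AddSubgroup.subset_closure ?_
      exact ⟨(j + 1) :: L, by simp, by simp, by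
        intro i hi
        rcases List.mem_cons.1 hi with h1 | h2
        · omega
        · exact hLall i h2, by simp; omega, rfl⟩
    · refine hom_closure_mem (AddMonoidHom.mulLeft (r * w j)) ?_ (ih hLall)
      rintro s ⟨L', hne, hlen, hall', hsum, rfl⟩
      refine AddSubgroup.subset_closure ?_
      refine ⟨j :: L', by simp, by simp; omega, ?_, by simp; omega, ?_⟩
      · intro i hi
        rcases List.mem_cons.1 hi with h1 | h2
        · omega
        · exact hall' i h2
      · show r * w j * commWord r w L' = _
        rw [commWord_cons]

/- STATEMENT 5 (commutator expansion (A.5) of Lemma A.2, algebraic form):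
in an associative ring, if [h, r] = −r w₁ r and [h, w_j] = w_{j+1} for j ≥ 1,
then for every l ≥ 1, ad_h^l(r) is an integer combination of words
r w_{j₁} r ⋯ w_{j_k} r with 1 ≤ k ≤ l, all j_i ≥ 1 and j₁ + ⋯ + j_k = l.
(Integer combinations = membership in the additive subgroup generated by the words.) -/
theorem ad_resolvent_expansion
    {A : Type*} [Ring A] (h r : A) (w : ℕ → A)
    (hr : h * r - r * h = -(r * w 1 * r))
    (hw : ∀ j : ℕ, 1 ≤ j → h * w j - w j * h = w (j + 1)) :
    ∀ l : ℕ, 1 ≤ l →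
      adPow h l r ∈ AddSubgroup.closure
        {x : A | ∃ L : List ℕ, L ≠ [] ∧ L.length ≤ l ∧ (∀ j ∈ L, 1 ≤ j) ∧
          L.sum = l ∧ x = commWord r w L} := by
  intro l hl
  induction l, hl using Nat.le_induction with
  | base =>
    show h * r - r * h ∈ _
    rw [hr]
    refine neg_mem (AddSubgroup.subset_closure ?_)
    exact ⟨[1], by simp, by simp, by simp, by simp,
      by rw [commWord_cons, commWord_nil]⟩
  | succ l hl ih =>
    show h * adPow h l r - adPow h l r * h ∈ _
    have δ : A →+ A := AddMonoidHom.mulLeft h - AddMonoidHom.mulRight h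
    refine hom_closure_mem (AddMonoidHom.mulLeft h - AddMonoidHom.mulRight h) ?_ ih
    rintro s ⟨L, hne, hlen, hall, hsum, rfl⟩
    have := key_comm h r w hr hw L hall
    refine AddSubgroup.closure_mono ?_ this
    rintro x ⟨L', h1, h2, h3, h4, h5⟩
    exact ⟨L', h1, by omega, h3, by omega, h5⟩
end

section
/- Let ℋ be a Hilbert space, H self-adjoint on ℋ, E ∈ ℝ, P = 1_{(-∞,E]}(H), and let T be a bounded operator on Ran P (extended by its definition on Ran P) satisfying the intertwining relation e^{-itH} T e^{itH} = T_t on Ran P for a family of operators T_t, for all t ∈ ℝ. Suppose moreover that for all Φ ∈ D(H) and Ψ ∈ Ran P the function t ↦ ⟨Φ, T_t Ψ⟩ is differentiable at 0 with derivative ⟨Φ, S Ψ⟩ for some operator S bounded on Ran P. Then for every Ψ ∈ Ran P, T Ψ ∈ D(H) and i H T Ψ − T (i H Ψ) = −S Ψ. -/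
open scoped InnerProductSpace

/- STATEMENT 7 (abstract form of Lemma 2.2): H self-adjoint with unitary group
U t = e^{itH}; P = 1_{(-∞,E]}(H) (commuting with U, with Ran P ⊆ D(H));
T bounded with intertwining e^{-itH} T e^{itH} = T_t on Ran P; if t ↦ ⟨Φ, T_t Ψ⟩
is differentiable at 0 with derivative ⟨Φ, S Ψ⟩ for all Φ ∈ D(H), Ψ ∈ Ran P,
then TΨ ∈ D(H) and iH(TΨ) − T(iHΨ) = −SΨ. -/
theorem asymptotic_commutator_identity
    {ℋ : Type*} [NormedAddCommGroup ℋ] [InnerProductSpace ℂ ℋ] [CompleteSpace ℋ]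
    (H : ℋ →ₗ.[ℂ] ℋ) (hH : IsSelfAdjoint H)
    (U : ℝ → ℋ →L[ℂ] ℋ)
    (hU0 : U 0 = ContinuousLinearMap.id ℂ ℋ)
    (hUgroup : ∀ s t : ℝ, U (s + t) = (U s).comp (U t))
    (hUiso : ∀ (t : ℝ) (x : ℋ), ‖U t x‖ = ‖x‖)
    (hUgen : ∀ Φ : H.domain, HasDerivAt (fun t : ℝ => U t (Φ : ℋ)) (Complex.I • H Φ) 0)
    (P : ℋ →L[ℂ] ℋ)
    (hPU : ∀ t : ℝ, (U t).comp P = P.comp (U t))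
    (hPdom : ∀ x : ℋ, P x = x → x ∈ H.domain)
    (T S : ℋ →L[ℂ] ℋ) (Tt : ℝ → ℋ → ℋ)
    (hinter : ∀ (t : ℝ) (Ψ : ℋ), P Ψ = Ψ → U (-t) (T (U t Ψ)) = Tt t Ψ)
    (hderiv : ∀ (Φ : H.domain) (Ψ : ℋ), P Ψ = Ψ →
      HasDerivAt (fun t : ℝ => ⟪(Φ : ℋ), Tt t Ψ⟫_ℂ) ⟪(Φ : ℋ), S Ψ⟫_ℂ 0) :
    ∀ Ψ : ℋ, ∀ hΨ : P Ψ = Ψ, ∃ hmem : T Ψ ∈ H.domain,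
      Complex.I • H ⟨T Ψ, hmem⟩ - T (Complex.I • H ⟨Ψ, hPdom Ψ hΨ⟩) = -(S Ψ) := by
  intro Ψ hΨ
  set Ψ' : H.domain := ⟨Ψ, hPdom Ψ hΨ⟩ with hΨ'
  -- inner products are preserved by U t
  have hinner : ∀ (t : ℝ) (x y : ℋ), ⟪U t x, U t y⟫_ℂ = ⟪x, y⟫_ℂ := by
    intro t x y
    exact LinearIsometry.inner_map_map ⟨(U t).toLinearMap, hUiso t⟩ x y
  have hUinv : ∀ (t : ℝ) (x : ℋ), U t (U (-t) x) = x := by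
    intro t x
    have h := congrArg (fun (A : ℋ →L[ℂ] ℋ) => A x) (hUgroup t (-t)).symm
    simpa [add_neg_cancel, hU0] using h
  -- the key identity from differentiating
  have key : ∀ Φ : H.domain, ⟪(Φ : ℋ), S Ψ⟫_ℂ =
      ⟪(Φ : ℋ), T (Complex.I • H Ψ')⟫_ℂ + ⟪Complex.I • H Φ, T Ψ⟫_ℂ := by
    intro Φ
    have hTU : HasDerivAt (fun t : ℝ => T (U t Ψ)) (T (Complex.I • H Ψ')) 0 := by
      have h0 := ((T.hasFDerivAt (x := U 0 (Ψ' : ℋ))).restrictScalars ℝ).comp_hasDerivAt 0 (hUgen Ψ')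
      simpa [Function.comp_def] using h0
    have h1 : HasDerivAt (fun t : ℝ => ⟪U t (Φ : ℋ), T (U t Ψ)⟫_ℂ)
        (⟪U 0 (Φ : ℋ), T (Complex.I • H Ψ')⟫_ℂ + ⟪Complex.I • H Φ, T (U 0 Ψ)⟫_ℂ) 0 :=
      HasDerivAt.inner ℂ (hUgen Φ) hTU
    have h2 : (fun t : ℝ => ⟪U t (Φ : ℋ), T (U t Ψ)⟫_ℂ)
        = fun t : ℝ => ⟪(Φ : ℋ), Tt t Ψ⟫_ℂ := by
      funext t
      rw [← hinter t Ψ hΨ, ← hinner t (Φ : ℋ) (U (-t) (T (U t Ψ))), hUinv t]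
    rw [h2] at h1
    have := (hderiv Φ Ψ hΨ).unique h1
    simpa [hU0] using this
  -- rewrite the key identity as an adjoint relation
  set w : ℋ := Complex.I • S Ψ - Complex.I • T (Complex.I • H Ψ') with hw
  have hadj : ∀ Φ : H.domain, ⟪w, (Φ : ℋ)⟫_ℂ = ⟪T Ψ, H Φ⟫_ℂ := by
    intro Φ
    have h := key Φ
    rw [inner_smul_left] at h
    have h' : ⟪H Φ, T Ψ⟫_ℂ = ⟪(Φ : ℋ), w⟫_ℂ := by
      rw [hw, inner_sub_right, inner_smul_right, inner_smul_right]
      have := congrArg (fun z => Complex.I * z) h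
      simp only [mul_add] at this
      rw [this]
      simp [Complex.conj_I]
      rw [← mul_assoc, Complex.I_mul_I]
      rw [inner_smul_right]
      linear_combination (⟪H Φ, T Ψ⟫_ℂ + ⟪(Φ : ℋ), T (H Ψ')⟫_ℂ) * Complex.I_sq
    calc ⟪w, (Φ : ℋ)⟫_ℂ = starRingEnd ℂ ⟪(Φ : ℋ), w⟫_ℂ := (inner_conj_symm _ _).symm
      _ = starRingEnd ℂ ⟪H Φ, T Ψ⟫_ℂ := by rw [h']
      _ = ⟪T Ψ, H Φ⟫_ℂ := inner_conj_symm _ _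
  have hH' : H.adjoint = H := LinearPMap.isSelfAdjoint_def.mp hH
  have hmem' : T Ψ ∈ H.adjoint.domain :=
    LinearPMap.mem_adjoint_domain_of_exists _ ⟨w, hadj⟩
  have hmem : T Ψ ∈ H.domain := hH' ▸ hmem'
  have happly : ∀ (A : ℋ →ₗ.[ℂ] ℋ) (_ : H.adjoint = A) (h : T Ψ ∈ A.domain),
      A ⟨T Ψ, h⟩ = w := by
    rintro A rfl h
    exact LinearPMap.adjoint_apply_eq hH.dense_domain ⟨T Ψ, h⟩ hadj
  have hHTψ : H ⟨T Ψ, hmem⟩ = w := happly H hH' hmem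
  refine ⟨hmem, ?_⟩
  have hII : ∀ x : ℋ, Complex.I • Complex.I • x = -x := fun x => by
    rw [smul_smul, Complex.I_mul_I, neg_one_smul]
  rw [hHTψ, hw, smul_sub, hII, hII]
  abel
end
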